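/- Let S be a commutative semiring and G a cancellative torsion-free commutative monoid. Then S is entire (has no nonzero zero-divisors) if and only if the monoid semiring S[G] is entire. -/

import Mathlib

section Groth

variable {G : Type*} [AddCancelCommMonoid G]

private def gsetoid (G : Type*) [AddCancelCommMonoid G] : Setoid (G × G) where
  r p q := p.1 + q.2 = q.1 + p.2
  iseqv := by
    refine ⟨fun p => rfl, fun h => h.symm, fun {p q r} h1 h2 => ?_⟩
    have h := congrArg₂ (· + ·) h1 h2
    refine add_left_cancel (a := q.1 + q.2) ?_
    calc q.1 + q.2 + (p.1 + r.2) = (p.1 + q.2) + (q.1 + r.2) := by abel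
      _ = (q.1 + p.2) + (r.1 + q.2) := h
      _ = q.1 + q.2 + (r.1 + p.2) := by abel

@[reducible] private def Groth (G : Type*) [AddCancelCommMonoid G] := Quotient (gsetoid G)

private instance : Zero (Groth G) := ⟨⟦(0, 0)⟧⟩

private instance : Add (Groth G) :=
  ⟨Quotient.map₂ (fun p q => (p.1 + q.1, p.2 + q.2)) (by
    rintro ⟨a1, a2⟩ ⟨b1, b2⟩ hab ⟨c1, c2⟩ ⟨d1, d2⟩ hcd
    show a1 + c1 + (b2 + d2) = b1 + d1 + (a2 + c2)
    have hab' : a1 + b2 = b1 + a2 := hab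
    have hcd' : c1 + d2 = d1 + c2 := hcd
    calc a1 + c1 + (b2 + d2) = (a1 + b2) + (c1 + d2) := by abel
      _ = (b1 + a2) + (d1 + c2) := by rw [hab', hcd']
      _ = b1 + d1 + (a2 + c2) := by abel)⟩

private instance : Neg (Groth G) :=
  ⟨Quotient.map (fun p => (p.2, p.1)) (by
    rintro ⟨a1, a2⟩ ⟨b1, b2⟩ (hab : a1 + b2 = b1 + a2)
    show a2 + b1 = b2 + a1
    rw [add_comm a2 b1, add_comm b2 a1]
    exact hab.symm)⟩

private instance : AddCommGroup (Groth G) where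
  add := (· + ·)
  zero := 0
  neg := Neg.neg
  add_assoc := by
    rintro ⟨⟨a1, a2⟩⟩ ⟨⟨b1, b2⟩⟩ ⟨⟨c1, c2⟩⟩
    refine Quotient.sound ?_
    show a1 + b1 + c1 + (a2 + (b2 + c2)) = a1 + (b1 + c1) + (a2 + b2 + c2)
    abel
  zero_add := by
    rintro ⟨⟨a1, a2⟩⟩
    refine Quotient.sound ?_
    show 0 + a1 + a2 = a1 + (0 + a2)
    abel
  add_zero := by
    rintro ⟨⟨a1, a2⟩⟩
    refine Quotient.sound ?_
    show a1 + 0 + a2 = a1 + (a2 + 0)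
    abel
  add_comm := by
    rintro ⟨⟨a1, a2⟩⟩ ⟨⟨b1, b2⟩⟩
    refine Quotient.sound ?_
    show a1 + b1 + (b2 + a2) = b1 + a1 + (a2 + b2)
    abel
  neg_add_cancel := by
    rintro ⟨⟨a1, a2⟩⟩
    refine Quotient.sound ?_
    show a2 + a1 + 0 = 0 + (a1 + a2)
    abel
  nsmul := nsmulRec
  zsmul := zsmulRec
  nsmul_zero := fun _ => rfl
  nsmul_succ := fun _ _ => rfl
  zsmul_zero' := fun _ => rfl
  zsmul_succ' := fun _ _ => rfl
  zsmul_neg' := fun _ _ => rfl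

private def gIota : G →+ Groth G where
  toFun a := ⟦(a, 0)⟧
  map_zero' := rfl
  map_add' a b := Quotient.sound (by
    show a + b + (0 + 0) = a + b + 0
    abel)

private theorem gIota_injective : Function.Injective (gIota (G := G)) := by
  intro a b h
  have h2 : a + 0 = b + 0 := Quotient.exact h
  simpa using h2

private theorem groth_nsmul_mk (n : ℕ) (p : G × G) :
    n • (Quotient.mk (gsetoid G) p : Groth G) = Quotient.mk (gsetoid G) (n • p.1, n • p.2) := by
  induction n with
  | zero =>
    simp only [zero_nsmul]
    rfl
  | succ k ih =>
    rw [succ_nsmul, ih]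
    refine Quotient.sound ?_
    show k • p.1 + p.1 + (k + 1) • p.2 = (k + 1) • p.1 + (k • p.2 + p.2)
    rw [succ_nsmul, succ_nsmul]

private theorem groth_torsionfree
    (htf : ∀ (n : ℕ) (a b : G), 0 < n → n • a = n • b → a = b)
    (n : ℕ) (x : Groth G) (hn : 0 < n) : n • x = 0 → x = 0 := by
  induction x using Quotient.inductionOn with | _ p => ?_
  obtain ⟨a, b⟩ := p
  intro h
  rw [show (⟦(a, b)⟧ : Groth G) = Quotient.mk (gsetoid G) (a, b) from rfl,
    groth_nsmul_mk] at h
  have h' : n • a + 0 = 0 + n • b := Quotient.exact h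
  have : a = b := htf n a b hn (by simpa using h')
  subst this
  refine Quotient.sound ?_
  show a + 0 = 0 + a
  simp

private theorem groth_torsionfree_int
    (htf : ∀ (n : ℕ) (a b : G), 0 < n → n • a = n • b → a = b)
    (n : ℤ) (x : Groth G) (hn : n ≠ 0) (h : n • x = 0) : x = 0 := by
  rcases lt_trichotomy n 0 with hlt | rfl | hlt
  · have : (-n).toNat • x = 0 := by
      rw [← natCast_zsmul, Int.toNat_of_nonneg (by omega), neg_zsmul, h, neg_zero]
    exact groth_torsionfree htf _ x (by omega) this
  · exact absurd rfl hn
  · have : n.toNat • x = 0 := by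
      rw [← natCast_zsmul, Int.toNat_of_nonneg (by omega), h]
    exact groth_torsionfree htf _ x (by omega) this

private theorem uniqueSums_of_torsionfree
    (htf : ∀ (n : ℕ) (a b : G), 0 < n → n • a = n • b → a = b) :
    UniqueSums G := by
  classical
  set K := Groth G
  set R := Localization (nonZeroDivisors ℤ)
  letI V := LocalizedModule (nonZeroDivisors ℤ) K
  haveI : CharZero R :=
    charZero_of_injective_ringHom (IsFractionRing.injective ℤ R)
  letI : Module ℚ V := Module.compHom V (algebraMap ℚ R)
  have hinj : Function.Injective
      (fun a : G => LocalizedModule.mkLinearMap (nonZeroDivisors ℤ) K (gIota a)) := by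
    intro a b h
    simp only [LocalizedModule.mkLinearMap_apply] at h
    obtain ⟨u, hu⟩ := LocalizedModule.mk_eq.mp h
    simp only [one_smul] at hu
    have hu2 : (u : ℤ) • gIota a = (u : ℤ) • gIota b := by
      rw [← Submonoid.smul_def, ← Submonoid.smul_def]; exact hu
    have hu' : (u : ℤ) • (gIota a - gIota b) = 0 := by
      rw [smul_sub, hu2, sub_self]
    have : gIota a - gIota b = 0 :=
      groth_torsionfree_int htf (u : ℤ) _ (nonZeroDivisors.coe_ne_zero u) hu'
    exact gIota_injective (by rwa [sub_eq_zero] at this)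
  exact UniqueSums.of_injective_addHom
    ⟨fun a => LocalizedModule.mkLinearMap (nonZeroDivisors ℤ) K (gIota a),
      by intro a b; simp [map_add]⟩ hinj inferInstance

end Groth

/-- If `G` is a cancellative torsion-free commutative monoid, then a commutative
semiring `S` is entire (has no nonzero zero-divisors) if and only if the monoid
semiring `S[G]` is entire. -/
theorem entire_iff_monoidAlgebra_entire {S G : Type*} [CommSemiring S] [AddCommMonoid G]
    (hcanc : ∀ a b c : G, a + b = a + c → b = c)
    (htf : ∀ (n : ℕ) (a b : G), 0 < n → n • a = n • b → a = b) :
    (∀ a b : S, a * b = 0 → a = 0 ∨ b = 0) ↔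
      (∀ f g : AddMonoidAlgebra S G, f * g = 0 → f = 0 ∨ g = 0) := by
  constructor
  · intro h f g hfg
    letI : AddCancelCommMonoid G :=
      { ‹AddCommMonoid G› with add_left_cancel := fun a ⦃b c⦄ h => hcanc a b c h }
    haveI : NoZeroDivisors S := ⟨fun {a b} hab => h a b hab⟩
    haveI : UniqueSums G := uniqueSums_of_torsionfree htf
    exact eq_zero_or_eq_zero_of_mul_eq_zero hfg
  · intro h a b hab
    have key := h (AddMonoidAlgebra.single 0 a) (AddMonoidAlgebra.single 0 b) (by
      rw [AddMonoidAlgebra.single_mul_single, hab]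
      simp)
    rcases key with h1 | h1
    · exact Or.inl (AddMonoidAlgebra.single_eq_zero.mp h1)
    · exact Or.inr (AddMonoidAlgebra.single_eq_zero.mp h1)
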